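/- Let P be a nonsymmetric operad. Then the graded space P_{•+1} = ⊕_{n≥0} P_{n+1} equipped with the bracket [f,g]_GV := ι_f g − (-1)^{mn} ι_g f (for f ∈ P_{m+1}, g ∈ P_{n+1}) satisfies the graded Jacobi identity, and hence is a graded Lie algebra. -/

import Mathlib

/-- A nonsymmetric operad (in "arity minus one" indexing: `Q n` is the space of
operations of arity `n + 1`, i.e. the space `P_{n+1}` of the paper), given by a
collection of `k`-modules with partial compositions
`∘ᵢ : P_{m+1} × P_{n+1} → P_{m+n+1}` (here `i : Fin (m+1)` is the 0-based
position), satisfying the sequential and parallel associativity axioms and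
unit axioms.  The target degree is a free variable `p` constrained by
`m + n = p`, which avoids dependent-type casts in the axioms. -/
structure NSOperad (k : Type*) [Field k] (Q : ℕ → Type*)
    [∀ n, AddCommGroup (Q n)] [∀ n, Module k (Q n)] where
  comp : ∀ {m n p : ℕ}, m + n = p → Q m → Fin (m + 1) → Q n → Q p
  comp_add_left : ∀ {m n p : ℕ} (h : m + n = p) (f f' : Q m) (i : Fin (m + 1)) (g : Q n),
    comp h (f + f') i g = comp h f i g + comp h f' i g
  comp_add_right : ∀ {m n p : ℕ} (h : m + n = p) (f : Q m) (i : Fin (m + 1)) (g g' : Q n),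
    comp h f i (g + g') = comp h f i g + comp h f i g'
  comp_smul_left : ∀ {m n p : ℕ} (h : m + n = p) (a : k) (f : Q m) (i : Fin (m + 1)) (g : Q n),
    comp h (a • f) i g = a • comp h f i g
  comp_smul_right : ∀ {m n p : ℕ} (h : m + n = p) (a : k) (f : Q m) (i : Fin (m + 1)) (g : Q n),
    comp h f i (a • g) = a • comp h f i g
  one : Q 0
  comp_one : ∀ {m : ℕ} (f : Q m) (i : Fin (m + 1)), comp (Nat.add_zero m) f i one = f
  one_comp : ∀ {m : ℕ} (f : Q m), comp (Nat.zero_add m) one 0 f = f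
  assoc_seq : ∀ {m n l q r p : ℕ} (h0 : n + l = q) (h1 : m + q = p) (h2 : m + n = r)
    (h3 : r + l = p) (f : Q m) (g : Q n) (hh : Q l) (i : Fin (m + 1)) (j : Fin (n + 1)),
    comp h1 f i (comp h0 g j hh) =
      comp h3 (comp h2 f i g) ⟨(i : ℕ) + (j : ℕ), by have := i.isLt; have := j.isLt; omega⟩ hh
  assoc_par : ∀ {m n l r s p : ℕ} (h2 : m + n = r) (h3 : r + l = p) (h4 : m + l = s)
    (h5 : s + n = p) (f : Q m) (g : Q n) (hh : Q l) (i j : Fin (m + 1)), (i : ℕ) < (j : ℕ) →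
    comp h3 (comp h2 f i g) ⟨(j : ℕ) + n, by have := j.isLt; omega⟩ hh =
      comp h5 (comp h4 f j hh) ⟨(i : ℕ), by have := i.isLt; omega⟩ g

namespace NSOperad

variable {k : Type*} [Field k] {Q : ℕ → Type*}
  [∀ n, AddCommGroup (Q n)] [∀ n, Module k (Q n)]

/-- Transport along an equality of degrees. -/
def tr {i j : ℕ} (h : i = j) (x : Q i) : Q j := h ▸ x

variable (O : NSOperad k Q)

/-- The contraction operator `ι_g f := Σᵢ (-1)^{(i-1)(n-1)} f ∘ᵢ g`
(for `f ∈ P_{m+1}`, `g ∈ P_{n+1}` in paper degrees). -/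
def iota {m n : ℕ} (g : Q n) (f : Q m) : Q (m + n) :=
  ∑ i : Fin (m + 1), ((-1 : k) ^ ((i : ℕ) * n)) • O.comp rfl f i g

/-- `π ∈ P_2` is a multiplication if `π ∘₁ π = π ∘₂ π`. -/
def IsMult (π : Q 1) : Prop := O.comp rfl π 0 π = O.comp rfl π 1 π

/-- The Gerstenhaber–Voronov bracket `[f,g]_GV = ι_f g − (-1)^{mn} ι_g f`. -/
def gv {m n : ℕ} (f : Q m) (g : Q n) : Q (m + n) :=
  tr (by omega : n + m = m + n) (O.iota f g) - ((-1 : k) ^ (m * n)) • O.iota g f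

/-- The differential `δ_π f := −[π, f]_GV`. -/
def delta (π : Q 1) {n : ℕ} (f : Q n) : Q (n + 1) :=
  - tr (by omega : 1 + n = n + 1) (O.gv π f)

/-- The map `θ f := −ι_f π`. -/
def theta (π : Q 1) {n : ℕ} (f : Q n) : Q (n + 1) :=
  - tr (by omega : 1 + n = n + 1) (O.iota f π)

/-- The map `D f := −ι_π f`. -/
def Dop (π : Q 1) {n : ℕ} (f : Q n) : Q (n + 1) := - O.iota π f

/-- The cup product `f ∪_π g := (π ∘₂ g) ∘₁ f`. -/
def cup (π : Q 1) {m n : ℕ} (f : Q m) (g : Q n) : Q (m + n + 1) :=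
  O.comp (by omega : (1 + n) + m = m + n + 1) (O.comp rfl π 1 g) 0 f

/-- The cup bracket `[f,g]_π := f ∪_π g − (-1)^{(m+1)(n+1)} g ∪_π f`
(paper degrees `m+1`, `n+1`). -/
def cupBracket (π : Q 1) {m n : ℕ} (f : Q m) (g : Q n) : Q (m + n + 1) :=
  O.cup π f g - ((-1 : k) ^ ((m + 1) * (n + 1))) •
    tr (by omega : n + m + 1 = m + n + 1) (O.cup π g f)

/-- The Frölicher–Nijenhuis bracket
`[f,g]_FN := [f,g]_π + (-1)^{m+1} ι_{δ_π f} g − (-1)^{(m+2)(n+1)} ι_{δ_π g} f`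
(paper degrees `m+1`, `n+1`). -/
def fn (π : Q 1) {m n : ℕ} (f : Q m) (g : Q n) : Q (m + n + 1) :=
  O.cupBracket π f g
    + ((-1 : k) ^ (m + 1)) •
        tr (by omega : n + (m + 1) = m + n + 1) (O.iota (O.delta π f) g)
    - ((-1 : k) ^ ((m + 2) * (n + 1))) •
        tr (by omega : m + (n + 1) = m + n + 1) (O.iota (O.delta π g) f)

/-- The derived bracket
`[f,g]_D := [f,g]_π + ι_{θ f} g − (-1)^{(m+1)(n+1)} ι_{θ g} f`. -/
def derived (π : Q 1) {m n : ℕ} (f : Q m) (g : Q n) : Q (m + n + 1) :=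
  O.cupBracket π f g
    + tr (by omega : n + (m + 1) = m + n + 1) (O.iota (O.theta π f) g)
    - ((-1 : k) ^ ((m + 1) * (n + 1))) •
        tr (by omega : m + (n + 1) = m + n + 1) (O.iota (O.theta π g) f)

/-- The deformed element `π_S := π ∘₁ S + π ∘₂ S − S ∘₁ π` for `S ∈ P_1`. -/
def piDef (π : Q 1) (S : Q 0) : Q 1 :=
  O.comp rfl π 0 S + O.comp rfl π 1 S - O.comp rfl S 0 π

/-- `S ∈ P_1` is a Nijenhuis element for the multiplication `π`:
`(π ∘₂ S) ∘₁ S = S ∘₁ (π ∘₁ S + π ∘₂ S − S ∘₁ π)`. -/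
def IsNijenhuisFor (π : Q 1) (S : Q 0) : Prop :=
  O.comp rfl (O.comp rfl π 1 S) 0 S = O.comp rfl S 0 (O.piDef π S)

/-- Powers `N^j := N ∘₁ N^{j-1}`, `N^0 = 𝟙`. -/
def Npow (N : Q 0) : ℕ → Q 0
  | 0 => O.one
  | (j + 1) => O.comp (rfl : (0 : ℕ) + 0 = 0) N 0 (Npow N j)

/-- `R ∈ P_1` is a Rota–Baxter element of weight `lam`:
`(π ∘₂ R) ∘₁ R = R ∘₁ (π ∘₁ R + π ∘₂ R + lam π)`. -/
def IsRB (π : Q 1) (lam : k) (R : Q 0) : Prop :=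
  O.comp rfl (O.comp rfl π 1 R) 0 R =
    O.comp rfl R 0 (O.comp rfl π 0 R + O.comp rfl π 1 R + lam • π)

/-- `r ∈ P_1` is an averaging element:
`(π ∘₂ r) ∘₁ r = r ∘₁ (π ∘₁ r) = r ∘₁ (π ∘₂ r)`. -/
def IsAvg (π : Q 1) (r : Q 0) : Prop :=
  O.comp rfl (O.comp rfl π 1 r) 0 r = O.comp rfl r 0 (O.comp rfl π 0 r) ∧
  O.comp rfl (O.comp rfl π 1 r) 0 r = O.comp rfl r 0 (O.comp rfl π 1 r)

end NSOperad

open NSOperad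
set_option linter.unusedSectionVars false

namespace NSOperad

variable {k : Type*} [Field k] {Q : ℕ → Type*}
  [∀ n, AddCommGroup (Q n)] [∀ n, Module k (Q n)] (O : NSOperad k Q)

section trlemmas

variable {i j l : ℕ}

@[simp] lemma tr_self (h : i = i) (x : Q i) : tr h x = x := rfl

@[simp] lemma tr_tr (h1 : i = j) (h2 : j = l) (x : Q i) :
    tr h2 (tr h1 x) = tr (h1.trans h2) x := by subst h1; subst h2; rfl

@[simp] lemma tr_add (h : i = j) (x y : Q i) : tr h (x + y) = tr h x + tr h y := by
  subst h; rfl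

@[simp] lemma tr_sub (h : i = j) (x y : Q i) : tr h (x - y) = tr h x - tr h y := by
  subst h; rfl

@[simp] lemma tr_neg (h : i = j) (x : Q i) : tr h (-x) = - tr h x := by subst h; rfl

@[simp] lemma tr_smul (h : i = j) (r : k) (x : Q i) : tr h (r • x) = r • tr h x := by
  subst h; rfl

end trlemmas

lemma comp_zero_left {m n p : ℕ} (e : m + n = p) (i : Fin (m+1)) (g : Q n) :
    O.comp e (0 : Q m) i g = 0 := by
  have h := O.comp_add_left e 0 0 i g
  rw [add_zero] at h
  exact left_eq_add.mp h

lemma comp_zero_right {m n p : ℕ} (e : m + n = p) (f : Q m) (i : Fin (m+1)) :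
    O.comp e f i (0 : Q n) = 0 := by
  have h := O.comp_add_right e f i 0 0
  rw [add_zero] at h
  exact left_eq_add.mp h

/-- `comp` with a natural-number position (junk value `0` out of range). -/
def cN {m n p : ℕ} (e : m + n = p) (f : Q m) (i : ℕ) (g : Q n) : Q p :=
  if hi : i < m + 1 then O.comp e f ⟨i, hi⟩ g else 0

lemma cN_of_lt {m n p : ℕ} (e : m + n = p) (f : Q m) {i : ℕ} (hi : i < m + 1) (g : Q n) :
    O.cN e f i g = O.comp e f ⟨i, hi⟩ g := dif_pos hi

lemma cN_add_left {m n p : ℕ} (e : m + n = p) (f f' : Q m) (i : ℕ) (g : Q n) :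
    O.cN e (f + f') i g = O.cN e f i g + O.cN e f' i g := by
  unfold cN; split
  · exact O.comp_add_left e f f' _ g
  · simp

lemma cN_add_right {m n p : ℕ} (e : m + n = p) (f : Q m) (i : ℕ) (g g' : Q n) :
    O.cN e f i (g + g') = O.cN e f i g + O.cN e f i g' := by
  unfold cN; split
  · exact O.comp_add_right e f _ g g'
  · simp

lemma cN_smul_left {m n p : ℕ} (e : m + n = p) (r : k) (f : Q m) (i : ℕ) (g : Q n) :
    O.cN e (r • f) i g = r • O.cN e f i g := by
  unfold cN; split
  · exact O.comp_smul_left e r f _ g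
  · simp

lemma cN_smul_right {m n p : ℕ} (e : m + n = p) (r : k) (f : Q m) (i : ℕ) (g : Q n) :
    O.cN e f i (r • g) = r • O.cN e f i g := by
  unfold cN; split
  · exact O.comp_smul_right e r f _ g
  · simp

lemma cN_sum_left {α : Type*} {m n p : ℕ} (e : m + n = p) (s : Finset α)
    (F : α → Q m) (i : ℕ) (g : Q n) :
    O.cN e (∑ x ∈ s, F x) i g = ∑ x ∈ s, O.cN e (F x) i g :=
  map_sum (AddMonoidHom.mk' (fun f => O.cN e f i g) (fun f f' => O.cN_add_left e f f' i g)) F s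

lemma cN_sum_right {α : Type*} {m n p : ℕ} (e : m + n = p) (f : Q m) (i : ℕ)
    (s : Finset α) (G : α → Q n) :
    O.cN e f i (∑ x ∈ s, G x) = ∑ x ∈ s, O.cN e f i (G x) :=
  map_sum (AddMonoidHom.mk' (fun g => O.cN e f i g) (fun g g' => O.cN_add_right e f i g g')) G s

/-- `iota` with a free target degree. -/
def iotaN {m n p : ℕ} (e : m + n = p) (g : Q n) (f : Q m) : Q p :=
  ∑ i ∈ Finset.range (m + 1), ((-1 : k) ^ (i * n)) • O.cN e f i g

lemma iota_eq {m n : ℕ} (g : Q n) (f : Q m) : O.iota g f = O.iotaN rfl g f := by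
  unfold iota iotaN
  rw [← Fin.sum_univ_eq_sum_range (fun i => ((-1 : k) ^ (i * n)) • O.cN rfl f i g) (m+1)]
  refine Finset.sum_congr rfl fun i _ => ?_
  rw [O.cN_of_lt rfl f i.isLt g]

lemma tr_iota {m n p : ℕ} (e : m + n = p) (g : Q n) (f : Q m) :
    tr e (O.iota g f) = O.iotaN e g f := by
  subst e; rw [tr_self, iota_eq]

end NSOperad
set_option linter.unusedSectionVars false

namespace NSOperad

variable {k : Type*} [Field k] {Q : ℕ → Type*}
  [∀ n, AddCommGroup (Q n)] [∀ n, Module k (Q n)] (O : NSOperad k Q)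

lemma assoc_seq_N {m n l q r p : ℕ} (h0 : n + l = q) (h1 : m + q = p) (h2 : m + n = r)
    (h3 : r + l = p) (f : Q m) (g : Q n) (hh : Q l) {i j : ℕ} (hi : i ≤ m) (hj : j ≤ n) :
    O.cN h1 f i (O.cN h0 g j hh) = O.cN h3 (O.cN h2 f i g) (i + j) hh := by
  have hi' : i < m + 1 := by omega
  have hj' : j < n + 1 := by omega
  have hij : i + j < r + 1 := by omega
  rw [O.cN_of_lt h0 g hj' hh, O.cN_of_lt h1 f hi', O.cN_of_lt h2 f hi' g,
    O.cN_of_lt h3 _ hij hh]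
  exact O.assoc_seq h0 h1 h2 h3 f g hh ⟨i, hi'⟩ ⟨j, hj'⟩

lemma assoc_par_N {m n l r s p : ℕ} (h2 : m + n = r) (h3 : r + l = p) (h4 : m + l = s)
    (h5 : s + n = p) (f : Q m) (g : Q n) (hh : Q l) {i j : ℕ} (hij : i < j) (hj : j ≤ m) :
    O.cN h3 (O.cN h2 f i g) (j + n) hh = O.cN h5 (O.cN h4 f j hh) i g := by
  have hi' : i < m + 1 := by omega
  have hj' : j < m + 1 := by omega
  have hjn : j + n < r + 1 := by omega
  have hi'' : i < s + 1 := by omega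
  rw [O.cN_of_lt h2 f hi' g, O.cN_of_lt h3 _ hjn hh, O.cN_of_lt h4 f hj' hh,
    O.cN_of_lt h5 _ hi'' g]
  exact O.assoc_par h2 h3 h4 h5 f g hh ⟨i, hi'⟩ ⟨j, hj'⟩ hij

lemma tr_iotaN {m n p p' : ℕ} (e : m + n = p) (e' : p = p') (g : Q n) (f : Q m) :
    tr e' (O.iotaN e g f) = O.iotaN (e.trans e') g f := by subst e'; rfl

lemma iotaN_add_fst {m n p : ℕ} (e : m + n = p) (g g' : Q n) (f : Q m) :
    O.iotaN e (g + g') f = O.iotaN e g f + O.iotaN e g' f := by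
  unfold iotaN
  rw [← Finset.sum_add_distrib]
  exact Finset.sum_congr rfl fun i _ => by rw [O.cN_add_right, smul_add]

lemma iotaN_smul_fst {m n p : ℕ} (e : m + n = p) (r : k) (g : Q n) (f : Q m) :
    O.iotaN e (r • g) f = r • O.iotaN e g f := by
  unfold iotaN
  rw [Finset.smul_sum]
  exact Finset.sum_congr rfl fun i _ => by rw [O.cN_smul_right, smul_comm]

lemma iotaN_add_snd {m n p : ℕ} (e : m + n = p) (g : Q n) (f f' : Q m) :
    O.iotaN e g (f + f') = O.iotaN e g f + O.iotaN e g f' := by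
  unfold iotaN
  rw [← Finset.sum_add_distrib]
  exact Finset.sum_congr rfl fun i _ => by rw [O.cN_add_left, smul_add]

lemma iotaN_smul_snd {m n p : ℕ} (e : m + n = p) (r : k) (g : Q n) (f : Q m) :
    O.iotaN e g (r • f) = r • O.iotaN e g f := by
  unfold iotaN
  rw [Finset.smul_sum]
  exact Finset.sum_congr rfl fun i _ => by rw [O.cN_smul_left, smul_comm]

lemma iotaN_sub_fst {m n p : ℕ} (e : m + n = p) (g g' : Q n) (f : Q m) :
    O.iotaN e (g - g') f = O.iotaN e g f - O.iotaN e g' f := by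
  rw [sub_eq_add_neg, sub_eq_add_neg, iotaN_add_fst, ← neg_one_smul k g',
    iotaN_smul_fst, neg_one_smul]

lemma iotaN_sub_snd {m n p : ℕ} (e : m + n = p) (g : Q n) (f f' : Q m) :
    O.iotaN e g (f - f') = O.iotaN e g f - O.iotaN e g f' := by
  rw [sub_eq_add_neg, sub_eq_add_neg, iotaN_add_snd, ← neg_one_smul k f',
    iotaN_smul_snd, neg_one_smul]

lemma iotaN_tr_fst {m n n' p : ℕ} (e : m + n' = p) (e0 : n = n') (g : Q n) (f : Q m) :
    O.iotaN e (tr e0 g) f = O.iotaN (by rw [e0]; exact e) g f := by subst e0; rfl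

lemma iotaN_tr_snd {m m' n p : ℕ} (e : m' + n = p) (e0 : m = m') (g : Q n) (f : Q m) :
    O.iotaN e g (tr e0 f) = O.iotaN (by rw [e0]; exact e) g f := by subst e0; rfl

/-- Sign helper. -/
lemma negpow_sub_even {m n t : ℕ} (h : m = n + 2 * t) : ((-1 : k)) ^ m = (-1) ^ n := by
  subst h; rw [pow_add, pow_mul, neg_one_sq, one_pow, mul_one]

lemma negpow_sq (m : ℕ) : ((-1 : k)) ^ m * (-1) ^ m = 1 := by
  rw [← pow_add]; exact Even.neg_one_pow ⟨m, rfl⟩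

end NSOperad
set_option linter.unusedSectionVars false

namespace NSOperad

variable {k : Type*} [Field k] {Q : ℕ → Type*}
  [∀ n, AddCommGroup (Q n)] [∀ n, Module k (Q n)] (O : NSOperad k Q)

/-- The sum over "disjoint insertions": `g` at position `p`, `h` at position `q` with
`p < q` (so `h` sits at slot `q + b` of the composite). -/
def D {a b c r : ℕ} (e : a + b + c = r) (f : Q a) (g : Q b) (h : Q c) : Q r :=
  ∑ p ∈ Finset.range (a + 1), ∑ q ∈ Finset.Ico (p + 1) (a + 1),
    ((-1 : k) ^ ((q + b) * c + p * b)) • O.cN e (O.cN rfl f p g) (q + b) h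

lemma tr_D {a b c r r' : ℕ} (e : a + b + c = r) (e' : r = r') (f : Q a) (g : Q b) (h : Q c) :
    tr e' (O.D e f g h) = O.D (e.trans e') f g h := by subst e'; rfl

lemma iota_iota {a b c : ℕ} (f : Q a) (g : Q b) (h : Q c) :
    O.iota h (O.iota g f)
      = O.iotaN (by omega : a + (b + c) = a + b + c) (O.iota h g) f
        + O.D rfl f g h
        + ((-1 : k) ^ (b * c)) • O.D (by omega : a + c + b = a + b + c) f h g := by
  set eB : a + (b + c) = a + b + c := by omega
  set eC : a + c + b = a + b + c := by omega
  set T : ℕ → ℕ → Q (a + b + c) :=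
    fun i j => ((-1 : k) ^ (j * c + i * b)) • O.cN rfl (O.cN rfl f i g) j h with hT
  have step1 : O.iota h (O.iota g f)
      = ∑ i ∈ Finset.range (a + 1), ∑ j ∈ Finset.range (a + b + 1), T i j := by
    calc O.iota h (O.iota g f)
        = ∑ j ∈ Finset.range (a + b + 1), ((-1 : k) ^ (j * c)) • O.cN rfl (O.iota g f) j h := by
          rw [O.iota_eq h (O.iota g f)]; rfl
      _ = ∑ j ∈ Finset.range (a + b + 1), ∑ i ∈ Finset.range (a + 1), T i j := by
          refine Finset.sum_congr rfl fun j _ => ?_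
          rw [O.iota_eq g f]
          show ((-1 : k) ^ (j * c)) • O.cN rfl
            (∑ i ∈ Finset.range (a + 1), ((-1 : k) ^ (i * b)) • O.cN rfl f i g) j h = _
          rw [O.cN_sum_left, Finset.smul_sum]
          refine Finset.sum_congr rfl fun i _ => ?_
          rw [O.cN_smul_left, smul_smul, ← pow_add, hT]
      _ = _ := Finset.sum_comm
  have step2 : ∀ i ∈ Finset.range (a + 1),
      ∑ j ∈ Finset.range (a + b + 1), T i j
        = ((∑ j ∈ Finset.Ico 0 i, T i j)
          + (((-1 : k) ^ (i * (b + c))) • O.cN eB f i (O.iota h g)))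
          + ∑ q ∈ Finset.Ico (i + 1) (a + 1), T i (q + b) := by
    intro i hi
    rw [Finset.mem_range] at hi
    have hia : i ≤ a := by omega
    rw [Finset.range_eq_Ico,
      ← Finset.sum_Ico_consecutive (fun j => T i j)
        (show 0 ≤ i + b + 1 by omega) (show i + b + 1 ≤ a + b + 1 by omega),
      ← Finset.sum_Ico_consecutive (fun j => T i j)
        (show 0 ≤ i by omega) (show i ≤ i + b + 1 by omega)]
    congr 1
    congr 1
    · -- middle: nested insertions
      rw [Finset.sum_Ico_eq_sum_range, show i + b + 1 - i = b + 1 by omega]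
      calc ∑ t ∈ Finset.range (b + 1), T i (i + t)
          = ∑ t ∈ Finset.range (b + 1),
              ((-1 : k) ^ (i * (b + c))) • (((-1 : k) ^ (t * c)) •
                O.cN eB f i (O.cN rfl g t h)) := by
            refine Finset.sum_congr rfl fun t ht => ?_
            rw [Finset.mem_range] at ht
            rw [hT]
            show ((-1 : k) ^ ((i + t) * c + i * b)) • O.cN rfl (O.cN rfl f i g) (i + t) h = _
            rw [← O.assoc_seq_N rfl eB rfl rfl f g h hia (show t ≤ b by omega),
              show (i + t) * c + i * b = i * (b + c) + t * c by ring, pow_add, mul_smul]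
        _ = ((-1 : k) ^ (i * (b + c))) •
              O.cN eB f i (∑ t ∈ Finset.range (b + 1), ((-1 : k) ^ (t * c)) • O.cN rfl g t h) := by
            rw [O.cN_sum_right, Finset.smul_sum]
            refine Finset.sum_congr rfl fun t _ => ?_
            rw [O.cN_smul_right]
        _ = ((-1 : k) ^ (i * (b + c))) • O.cN eB f i (O.iota h g) := by
            rw [O.iota_eq h g]; rfl
    · -- right: h strictly to the right of g
      rw [Finset.sum_Ico_eq_sum_range, Finset.sum_Ico_eq_sum_range,
        show a + b + 1 - (i + b + 1) = a + 1 - (i + 1) by omega]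
      exact Finset.sum_congr rfl fun t _ => congrArg (T i) (by omega)
  rw [step1, Finset.sum_congr rfl step2, Finset.sum_add_distrib, Finset.sum_add_distrib]
  have hA : ∑ i ∈ Finset.range (a + 1), ∑ j ∈ Finset.Ico 0 i, T i j
      = ((-1 : k) ^ (b * c)) • O.D eC f h g := by
    have swap : ∑ i ∈ Finset.range (a + 1), ∑ j ∈ Finset.Ico 0 i, T i j
        = ∑ p ∈ Finset.Ico 0 (a + 1), ∑ q ∈ Finset.Ico (p + 1) (a + 1), T q p := by
      rw [Finset.range_eq_Ico]
      exact (Finset.sum_Ico_Ico_comm' 0 (a + 1) (fun x y => T y x)).symm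
    rw [swap, ← Finset.range_eq_Ico]
    unfold D
    rw [Finset.smul_sum]
    refine Finset.sum_congr rfl fun p hp => ?_
    rw [Finset.smul_sum]
    refine Finset.sum_congr rfl fun q hq => ?_
    rw [Finset.mem_Ico] at hq
    rw [hT]
    show ((-1 : k) ^ (p * c + q * b)) • O.cN rfl (O.cN rfl f q g) p h = _
    rw [← O.assoc_par_N rfl eC rfl rfl f h g (show p < q by omega) (show q ≤ a by omega),
      smul_smul, ← pow_add]
    congr 1
    exact (negpow_sub_even (t := b * c) (by ring)).symm
  have hB : (∑ i ∈ Finset.range (a + 1), ((-1 : k) ^ (i * (b + c))) • O.cN eB f i (O.iota h g))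
      = O.iotaN eB (O.iota h g) f := rfl
  have hC : (∑ i ∈ Finset.range (a + 1), ∑ q ∈ Finset.Ico (i + 1) (a + 1), T i (q + b))
      = O.D rfl f g h := rfl
  rw [hA, hB, hC]
  abel

end NSOperad
set_option linter.unusedSectionVars false

namespace NSOperad

variable {k : Type*} [Field k] {Q : ℕ → Type*}
  [∀ n, AddCommGroup (Q n)] [∀ n, Module k (Q n)] (O : NSOperad k Q)

/-- The graded (right) pre-Lie identity for the contraction operation. -/
lemma prelie {a b c r : ℕ} (e : a + b + c = r) (f : Q a) (g : Q b) (h : Q c) :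
    O.iotaN (by omega : a + b + c = r) h (O.iota g f)
      - O.iotaN (by omega : a + (b + c) = r) (O.iota h g) f
    = ((-1 : k) ^ (b * c)) •
        (O.iotaN (by omega : a + c + b = r) g (O.iota h f)
          - O.iotaN (by omega : a + (c + b) = r) (O.iota g h) f) := by
  subst e
  have H1 := O.iota_iota f g h
  have H2 := congrArg (tr (show a + c + b = a + b + c by omega)) (O.iota_iota f h g)
  rw [tr_add, tr_add, tr_smul, O.tr_iota, O.tr_iotaN, O.tr_D, O.tr_D] at H2
  have e1 : O.iotaN (by omega : a + b + c = a + b + c) h (O.iota g f)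
      = O.iota h (O.iota g f) := (O.iota_eq h (O.iota g f)).symm
  rw [e1, H1, H2]
  simp only [smul_sub, smul_add, smul_smul]
  rw [show ((-1 : k) ^ (b * c) * (-1 : k) ^ (c * b)) = 1 by
    rw [mul_comm c b]; exact negpow_sq (k := k) (b * c), one_smul]
  abel
end NSOperad
set_option linter.unusedSectionVars false

namespace NSOperad

variable {k : Type*} [Field k] {Q : ℕ → Type*}
  [∀ n, AddCommGroup (Q n)] [∀ n, Module k (Q n)] (O : NSOperad k Q)

lemma iotaN_iotaN_fst {m m0 n0 q r : ℕ} (e : m + q = r) (e0 : m0 + n0 = q)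
    (x : Q n0) (y : Q m0) (z : Q m) :
    O.iotaN e (O.iotaN e0 x y) z = O.iotaN (by omega : m + (m0 + n0) = r) (O.iota x y) z := by
  rw [← O.tr_iota e0 x y, O.iotaN_tr_fst]

lemma iotaN_iotaN_snd {m0 n0 q n r : ℕ} (e : q + n = r) (e0 : m0 + n0 = q)
    (x : Q n0) (y : Q m0) (g : Q n) :
    O.iotaN e g (O.iotaN e0 x y) = O.iotaN (by omega : m0 + n0 + n = r) g (O.iota x y) := by
  rw [← O.tr_iota e0 x y, O.iotaN_tr_snd]

lemma tr_gv {m n r : ℕ} (e : m + n = r) (x : Q m) (y : Q n) :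
    tr e (O.gv x y)
      = O.iotaN (by omega : n + m = r) x y
        - ((-1 : k) ^ (m * n)) • O.iotaN (by omega : m + n = r) y x := by
  subst e
  rw [tr_self]
  unfold gv
  rw [O.tr_iota, O.iota_eq y x]

lemma gv_eq {m n : ℕ} (x : Q m) (y : Q n) :
    O.gv x y
      = O.iotaN (by omega : n + m = m + n) x y
        - ((-1 : k) ^ (m * n)) • O.iotaN (by omega : m + n = m + n) y x := by
  have := O.tr_gv rfl x y
  rwa [tr_self] at this

end NSOperad
set_option maxHeartbeats 2000000 in
theorem gv_bracket_graded_lie {k : Type*} [Field k] {Q : ℕ → Type*}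
    [∀ n, AddCommGroup (Q n)] [∀ n, Module k (Q n)] (O : NSOperad k Q)
    {a b c : ℕ} (f : Q a) (g : Q b) (h : Q c) :
    O.gv f g = -(((-1 : k) ^ (a * b)) • tr (by omega : b + a = a + b) (O.gv g f)) ∧
    ((-1 : k) ^ (a * c)) • tr (by omega : a + b + c = a + b + c) (O.gv (O.gv f g) h) +
      ((-1 : k) ^ (b * a)) • tr (by omega : b + c + a = a + b + c) (O.gv (O.gv g h) f) +
      ((-1 : k) ^ (c * b)) • tr (by omega : c + a + b = a + b + c) (O.gv (O.gv h f) g) = 0 := by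
  constructor
  · rw [O.gv_eq f g, O.tr_gv (by omega : b + a = a + b) g f]
    simp only [smul_sub, smul_smul, neg_sub, ← pow_add]
    rw [show ((-1:k))^(a*b + b*a) = 1 from by rw [negpow_sub_even (n := 0) (t := a*b) (by ring), pow_zero], one_smul]
  · simp only [O.tr_gv, O.gv_eq, tr_sub, tr_smul, tr_self, O.tr_iotaN,
      O.iotaN_sub_fst, O.iotaN_sub_snd, O.iotaN_smul_fst, O.iotaN_smul_snd,
      O.iotaN_tr_fst, O.iotaN_tr_snd, O.iotaN_iotaN_fst, O.iotaN_iotaN_snd,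
      smul_sub, smul_add, smul_smul, ← pow_add]
    rw [show ((-1:k))^(a*c + ((a+b)*c + a*b)) = (-1)^(a*b + b*c) from
          negpow_sub_even (t := a*c) (by ring),
        show ((-1:k))^(b*a + ((b+c)*a + b*c)) = (-1)^(b*c + c*a) from
          negpow_sub_even (t := a*b) (by ring),
        show ((-1:k))^(c*b + ((c+a)*b + c*a)) = (-1)^(c*a + a*b) from
          negpow_sub_even (t := b*c) (by ring),
        show ((-1:k))^(c*b + (c+a)*b) = (-1)^(a*b) from
          negpow_sub_even (t := b*c) (by ring),
        show ((-1:k))^(a*c + (a+b)*c) = (-1)^(b*c) from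
          negpow_sub_even (t := a*c) (by ring),
        show ((-1:k))^(b*a + (b+c)*a) = (-1)^(c*a) from
          negpow_sub_even (t := a*b) (by ring)]
    have P1 := O.prelie (rfl : a + b + c = a + b + c) f g h
    have P2 := O.prelie (show b + c + a = a + b + c by omega) g h f
    have P3 := O.prelie (show c + a + b = a + b + c by omega) h f g
    have Q1 := congrArg (fun z => ((-1:k)^(b*c)) • z) P1
    have Q2 := congrArg (fun z => ((-1:k)^(c*a)) • z) P2
    have Q3 := congrArg (fun z => ((-1:k)^(a*b)) • z) P3
    simp only [smul_smul, negpow_sq, one_smul] at Q1 Q2 Q3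
    linear_combination (norm := module)
      ((-1:k)^(a*b)) • Q1 + ((-1:k)^(b*c)) • Q2 + ((-1:k)^(c*a)) • Q3
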